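/- If X is a topological space and A, B ⊆ X are both closed and locally connected, then A ∪ B is locally connected. -/
import Mathlib

open Filter Set Topology

/-- From a `nhdsWithin`-level local connectedness criterion, deduce
`LocallyConnectedSpace` for the subtype. -/
lemma locallyConnectedSpace_subtype_of_forall
    {X : Type*} [TopologicalSpace X] (S : Set X)
    (h : ∀ x ∈ S, ∀ U ∈ 𝓝[S] x, ∃ V ∈ 𝓝[S] x, IsPreconnected V ∧ V ⊆ U ∧ V ⊆ S) :
    LocallyConnectedSpace S := by
  rw [locallyConnectedSpace_iff_connected_subsets]
  intro x U hU
  have hU' : (Subtype.val '' U : Set X) ∈ 𝓝[S] (x : X) := by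
    rw [← map_nhds_subtype_val]
    exact image_mem_map hU
  obtain ⟨V, hVmem, hVconn, hVU, hVS⟩ := h x x.2 _ hU'
  refine ⟨((↑) ⁻¹' V : Set S), ?_, ?_, ?_⟩
  · exact preimage_coe_mem_nhds_subtype.mpr hVmem
  · have himg : (Subtype.val '' (((↑) ⁻¹' V : Set S)) : Set X) = V := by
      rw [Subtype.image_preimage_coe]
      exact inter_eq_right.mpr hVS
    have hind : Topology.IsInducing ((↑) : S → X) := Topology.IsInducing.subtypeVal
    rw [← hind.isPreconnected_image, himg]
    exact hVconn
  · intro y hy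
    obtain ⟨z, hzU, hz⟩ := hVU hy
    rwa [← Subtype.val_injective hz]

/-- `LocallyConnectedSpace` for a subtype gives a `nhdsWithin`-level criterion. -/
lemma forall_of_locallyConnectedSpace_subtype
    {X : Type*} [TopologicalSpace X] (S : Set X) [LocallyConnectedSpace S] :
    ∀ x ∈ S, ∀ U ∈ 𝓝[S] x,
      ∃ V ∈ 𝓝[S] x, IsPreconnected V ∧ V ⊆ U ∧ V ⊆ S ∧ x ∈ V := by
  intro x hx U hU
  have hU' : (Subtype.val ⁻¹' U : Set S) ∈ 𝓝 (⟨x, hx⟩ : S) :=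
    preimage_coe_mem_nhds_subtype.mpr hU
  obtain ⟨V, hVmem, hVconn, hVU⟩ :=
    locallyConnectedSpace_iff_connected_subsets.mp ‹_› (⟨x, hx⟩ : S) _ hU'
  refine ⟨Subtype.val '' V, ?_, ?_, ?_, ?_, ?_⟩
  · rw [show x = ((⟨x, hx⟩ : S) : X) from rfl, ← map_nhds_subtype_val]
    exact image_mem_map hVmem
  · exact (Topology.IsInducing.subtypeVal (t := S)).isPreconnected_image.mpr hVconn
  · rintro y ⟨z, hz, rfl⟩; exact hVU hz
  · rintro y ⟨z, hz, rfl⟩; exact z.2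
  · exact ⟨⟨x, hx⟩, mem_of_mem_nhds hVmem, rfl⟩

theorem union_closed_locallyConnected
    {X : Type*} [TopologicalSpace X] (A B : Set X)
    (hA : IsClosed A) (hB : IsClosed B)
    (hAl : LocallyConnectedSpace A) (hBl : LocallyConnectedSpace B) :
    LocallyConnectedSpace ↥(A ∪ B) := by
  apply locallyConnectedSpace_subtype_of_forall
  intro x hx U hU
  have key : ∀ (C D : Set X), IsClosed D → LocallyConnectedSpace C → x ∈ C → x ∉ D →
      U ∈ 𝓝[C ∪ D] x → ∃ V ∈ 𝓝[C ∪ D] x, IsPreconnected V ∧ V ⊆ U ∧ V ⊆ C ∪ D := by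
    intro C D hD hCl hxC hxD hU
    have hDc : Dᶜ ∈ 𝓝 x := hD.isOpen_compl.mem_nhds hxD
    have hUC : U ∩ Dᶜ ∈ 𝓝[C] x := by
      refine inter_mem (nhdsWithin_mono x subset_union_left hU) ?_
      exact mem_nhdsWithin_of_mem_nhds hDc
    obtain ⟨V, hVmem, hVconn, hVU, hVC, -⟩ :=
      forall_of_locallyConnectedSpace_subtype C x hxC _ hUC
    refine ⟨V, ?_, hVconn, fun y hy => (hVU hy).1, fun y hy => Or.inl (hVC hy)⟩
    -- V ∈ 𝓝[C ∪ D] x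
    obtain ⟨O, hOopen, hxO, hO⟩ := mem_nhdsWithin.mp hVmem
    rw [mem_nhdsWithin]
    refine ⟨O ∩ Dᶜ, hOopen.inter hD.isOpen_compl, ⟨hxO, hxD⟩, ?_⟩
    rintro y ⟨⟨hyO, hyD⟩, hyCD⟩
    rcases hyCD with hyC | hyD'
    · exact hO ⟨hyO, hyC⟩
    · exact absurd hyD' hyD
  rcases hx with hxA | hxB
  · by_cases hxB : x ∈ B
    · -- x ∈ A ∩ B : glue connected neighborhoods
      have hUA : U ∈ 𝓝[A] x := nhdsWithin_mono x subset_union_left hU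
      have hUB : U ∈ 𝓝[B] x := nhdsWithin_mono x subset_union_right hU
      obtain ⟨VA, hVAmem, hVAconn, hVAU, hVAA, hxVA⟩ :=
        forall_of_locallyConnectedSpace_subtype A x hxA _ hUA
      obtain ⟨VB, hVBmem, hVBconn, hVBU, hVBB, hxVB⟩ :=
        forall_of_locallyConnectedSpace_subtype B x hxB _ hUB
      refine ⟨VA ∪ VB, ?_, ?_, union_subset hVAU hVBU,
        union_subset_union hVAA hVBB⟩
      · obtain ⟨OA, hOAopen, hxOA, hOA⟩ := mem_nhdsWithin.mp hVAmem
        obtain ⟨OB, hOBopen, hxOB, hOB⟩ := mem_nhdsWithin.mp hVBmem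
        rw [mem_nhdsWithin]
        refine ⟨OA ∩ OB, hOAopen.inter hOBopen, ⟨hxOA, hxOB⟩, ?_⟩
        rintro y ⟨⟨hyA, hyB⟩, hyAB⟩
        rcases hyAB with h | h
        · exact Or.inl (hOA ⟨hyA, h⟩)
        · exact Or.inr (hOB ⟨hyB, h⟩)
      · exact hVAconn.union x hxVA hxVB hVBconn
    · exact key A B hB hAl hxA hxB hU
  · by_cases hxA : x ∈ A
    · -- symmetric to above; x ∈ A ∩ B handled there, but we redo via union_comm
      have hUA : U ∈ 𝓝[A] x := nhdsWithin_mono x subset_union_left hU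
      have hUB : U ∈ 𝓝[B] x := nhdsWithin_mono x subset_union_right hU
      obtain ⟨VA, hVAmem, hVAconn, hVAU, hVAA, hxVA⟩ :=
        forall_of_locallyConnectedSpace_subtype A x hxA _ hUA
      obtain ⟨VB, hVBmem, hVBconn, hVBU, hVBB, hxVB⟩ :=
        forall_of_locallyConnectedSpace_subtype B x hxB _ hUB
      refine ⟨VA ∪ VB, ?_, ?_, union_subset hVAU hVBU,
        union_subset_union hVAA hVBB⟩
      · obtain ⟨OA, hOAopen, hxOA, hOA⟩ := mem_nhdsWithin.mp hVAmem
        obtain ⟨OB, hOBopen, hxOB, hOB⟩ := mem_nhdsWithin.mp hVBmem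
        rw [mem_nhdsWithin]
        refine ⟨OA ∩ OB, hOAopen.inter hOBopen, ⟨hxOA, hxOB⟩, ?_⟩
        rintro y ⟨⟨hyA, hyB⟩, hyAB⟩
        rcases hyAB with h | h
        · exact Or.inl (hOA ⟨hyA, h⟩)
        · exact Or.inr (hOB ⟨hyB, h⟩)
      · exact hVAconn.union x hxVA hxVB hVBconn
    · have := key B A hA hBl hxB hxA (by rwa [union_comm])
      obtain ⟨V, hVmem, hc, hVU, hVS⟩ := this
      exact ⟨V, by rwa [union_comm], hc, hVU, by rwa [union_comm]⟩
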